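/- If Φ is true, then no state with status UNSAT is reachable from the initial state via the transition rules of basic Incremental Determinization. -/

import Mathlib

/-! Basic framework: variables are `X ⊕ Y` where `X` are the universal and
`Y` the existential variables (this makes `X` and `Y` disjoint by construction). -/

/-- A literal: a variable together with a polarity. -/
abbrev Lit (X Y : Type) := (X ⊕ Y) × Bool

/-- A clause is a finite set of literals. -/
abbrev Clause (X Y : Type) := Finset (Lit X Y)

/-- A (total) assignment to all variables. Assignments "to a set `D` of variables"
are modelled as total assignments; all notions below only inspect the relevant variables. -/
abbrev Assn (X Y : Type) := (X ⊕ Y) → Bool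

/-- An assignment satisfies a literal if it maps its variable to its polarity. -/
def satLit {X Y : Type} (σ : Assn X Y) (l : Lit X Y) : Prop := σ l.1 = l.2

/-- An assignment satisfies a clause if it satisfies at least one of its literals. -/
def satClause {X Y : Type} (σ : Assn X Y) (c : Clause X Y) : Prop := ∃ l ∈ c, satLit σ l

/-- An assignment satisfies a clause set if it satisfies every clause in it. -/
def satCnf {X Y : Type} (σ : Assn X Y) (ψ : Set (Clause X Y)) : Prop := ∀ c ∈ ψ, satClause σ c

/-- The combined assignment `(xa, ya)`. -/
def combine {X Y : Type} (xa : X → Bool) (ya : Y → Bool) : Assn X Y := Sum.elim xa ya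

/-- The restriction of an assignment to the universal variables `X`. -/
def restrX {X Y : Type} (σ : Assn X Y) : X → Bool := fun x => σ (Sum.inl x)

/-- Truth of the 2QBF `∀X.∃Y.φ`: there is a Skolem function `f` such that for every
assignment `xa` to `X` the combined assignment `(xa, f(xa))` satisfies `φ`. -/
def qbfTrue {X Y : Type} (φ : Set (Clause X Y)) : Prop :=
  ∃ f : (X → Bool) → (Y → Bool), ∀ xa : X → Bool, satCnf (combine xa (f xa)) φ

/-- `v` has a unique Skolem function for domain `χ` in `ψ`: for every assignment `xa` to `X`
satisfying `χ` there is exactly one Boolean `b` such that some assignment `ya` to the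
existential variables with `ya v = b` makes `(xa, ya)` satisfy `ψ`. -/
def uniqueSkolem {X Y : Type} (ψ : Set (Clause X Y)) (χ : (X → Bool) → Prop) (v : Y) : Prop :=
  ∀ xa : X → Bool, χ xa →
    ∃! b : Bool, ∃ ya : Y → Bool, ya v = b ∧ satCnf (combine xa ya) ψ

/-- `C|_D`: the clauses of `C` all of whose variables lie in `D`. -/
def restrictC {X Y : Type} (C : Set (Clause X Y)) (D : Set (X ⊕ Y)) : Set (Clause X Y) :=
  {c ∈ C | ∀ l ∈ c, l.1 ∈ D}

/-- Clause `c` has unique consequence `v` relative to `D`: it contains a literal of `v`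
and all its other literals are of variables in `D`. -/
def hasUC {X Y : Type} (c : Clause X Y) (v : Y) (D : Set (X ⊕ Y)) : Prop :=
  (∃ b : Bool, (Sum.inr v, b) ∈ c) ∧ ∀ l ∈ c, l.1 ≠ Sum.inr v → l.1 ∈ D

/-- `U_v`: the clauses of `C` with unique consequence `v` relative to `D`. -/
def UC {X Y : Type} (C : Set (Clause X Y)) (v : Y) (D : Set (X ⊕ Y)) : Set (Clause X Y) :=
  {c ∈ C | hasUC c v D}

/-- `A_(v,b)`: some clause `c` in `U_v` contains the literal `(v, b)` and the assignment
falsifies every literal of `c` other than the literals of `v`. -/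
def Ant {X Y : Type} (C : Set (Clause X Y)) (v : Y) (D : Set (X ⊕ Y)) (b : Bool)
    (σ : Assn X Y) : Prop :=
  ∃ c ∈ UC C v D, (Sum.inr v, b) ∈ c ∧ ∀ l ∈ c, l.1 ≠ Sum.inr v → ¬ satLit σ l

/-- `deterministic(v, C, χ, D)`. -/
def deterministic {X Y : Type} (v : Y) (C : Set (Clause X Y)) (χ : (X → Bool) → Prop)
    (D : Set (X ⊕ Y)) : Prop :=
  ∀ σ : Assn X Y, satCnf σ (restrictC C D) → χ (restrX σ) →
    Ant C v D true σ ∨ Ant C v D false σ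

/-- `unconflicted(v, C, χ, D)`. -/
def unconflicted {X Y : Type} (v : Y) (C : Set (Clause X Y)) (χ : (X → Bool) → Prop)
    (D : Set (X ⊕ Y)) : Prop :=
  ∀ σ : Assn X Y, satCnf σ (restrictC C D) → χ (restrX σ) →
    ¬ (Ant C v D true σ ∧ Ant C v D false σ)

/-- `v` has a unique Skolem function relative to `D` for domain `χ` in `C`: for every
assignment to `D` satisfying `C|_D` whose restriction to `X` satisfies `χ`, there is exactly
one Boolean `b` such that extending the assignment by `v ↦ b` satisfies every clause of `U_v`. -/
def uniqueSkolemRel {X Y : Type} [DecidableEq X] [DecidableEq Y] (v : Y)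
    (C : Set (Clause X Y)) (χ : (X → Bool) → Prop) (D : Set (X ⊕ Y)) : Prop :=
  ∀ σ : Assn X Y, satCnf σ (restrictC C D) → χ (restrX σ) →
    ∃! b : Bool, satCnf (Function.update σ (Sum.inr v) b) (UC C v D)

/-! The state of the Incremental Determinization solver. -/

/-- The solver status. -/
inductive Status (X Y : Type) where
  | ready : Status X Y
  | conflict (L : Clause X Y) (d : Assn X Y) : Status X Y
  | sat : Status X Y
  | unsat : Status X Y

/-- A solver state `(S, C, D, χ, α)`: a status, a stack of clause sets, a stack of sets of
variables, and two predicates on assignments to `X`. -/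
structure IDState (X Y : Type) where
  status : Status X Y
  C : List (Set (Clause X Y))
  D : List (Set (X ⊕ Y))
  chi : (X → Bool) → Prop
  alpha : (X → Bool) → Prop

/-- The union of the elements of a stack of sets. -/
def stackUnion {β : Type} (S : List (Set β)) : Set β := {x | ∃ s ∈ S, x ∈ s}

/-- The first element (index 0) of a stack of sets. -/
def first {β : Type} (S : List (Set β)) : Set β := S.getD 0 ∅

/-- Add an element to the last set of a stack. -/
def addLast {β : Type} : List (Set β) → β → List (Set β)
  | [], v => [{v}]
  | [s], v => [insert v s]
  | s :: t :: rest, v => s :: addLast (t :: rest) v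

/-- Add an element to the first set of a stack. -/
def addFirst {β : Type} : List (Set β) → β → List (Set β)
  | [], x => [{x}]
  | s :: rest, x => insert x s :: rest

/-- The initial state `(Ready, ⟨φ⟩, ⟨X⟩, ⊤, ⊤)`. -/
def initState {X Y : Type} (φ : Set (Clause X Y)) : IDState X Y :=
  ⟨Status.ready, [φ], [Set.range Sum.inl], fun _ => True, fun _ => True⟩

/-- The transition rules of basic Incremental Determinization. -/
inductive Step {X Y : Type} [DecidableEq X] [DecidableEq Y] :
    IDState X Y → IDState X Y → Prop

  | propagate (C : List (Set (Clause X Y))) (D : List (Set (X ⊕ Y)))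
      (χ α : (X → Bool) → Prop) (v : Y)
      (hv : Sum.inr v ∉ stackUnion D)
      (hdet : deterministic v (stackUnion C) (fun xa => χ xa ∧ α xa) (stackUnion D))
      (hunc : unconflicted v (stackUnion C) (fun xa => χ xa ∧ α xa) (stackUnion D)) :
      Step ⟨Status.ready, C, D, χ, α⟩ ⟨Status.ready, C, addLast D (Sum.inr v), χ, α⟩
  | decide (C : List (Set (Clause X Y))) (D : List (Set (X ⊕ Y)))
      (χ α : (X → Bool) → Prop) (v : Y) (δ : Set (Clause X Y))
      (hv : Sum.inr v ∉ stackUnion D) (hδfin : δ.Finite)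
      (hδ : ∀ c ∈ δ, hasUC c v (stackUnion D)) :
      Step ⟨Status.ready, C, D, χ, α⟩ ⟨Status.ready, C ++ [δ], D ++ [∅], χ, α⟩
  | sat (C : List (Set (Clause X Y))) (D : List (Set (X ⊕ Y)))
      (χ : (X → Bool) → Prop)
      (hD : stackUnion D = Set.univ) :
      Step ⟨Status.ready, C, D, χ, fun _ => True⟩ ⟨Status.sat, C, D, χ, fun _ => True⟩
  | conflict (C : List (Set (Clause X Y))) (D : List (Set (X ⊕ Y)))
      (χ α : (X → Bool) → Prop) (v : Y) (σ : Assn X Y)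
      (hv : Sum.inr v ∉ stackUnion D)
      (hsat : satCnf σ (restrictC (stackUnion C) (stackUnion D)))
      (hχ : χ (restrX σ)) (hα : α (restrX σ))
      (ht : Ant (stackUnion C) v (stackUnion D) true σ)
      (hf : Ant (stackUnion C) v (stackUnion D) false σ) :
      Step ⟨Status.ready, C, D, χ, α⟩
        ⟨Status.conflict {(Sum.inr v, true), (Sum.inr v, false)} σ, C, D, χ, α⟩
  | analyze (C : List (Set (Clause X Y))) (D : List (Set (X ⊕ Y)))
      (χ α : (X → Bool) → Prop) (L : Clause X Y) (σ : Assn X Y)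
      (c : Clause X Y) (l : Lit X Y)
      (hc : c ∈ first C) (hl : l ∈ L) (hlc : (l.1, !l.2) ∈ c) :
      Step ⟨Status.conflict L σ, C, D, χ, α⟩
        ⟨Status.conflict (L.erase l ∪ c.erase (l.1, !l.2)) σ, C, D, χ, α⟩
  | learn (C : List (Set (Clause X Y))) (D : List (Set (X ⊕ Y)))
      (χ α : (X → Bool) → Prop) (L : Clause X Y) (σ : Assn X Y)
      (h : ∃ l ∈ L, l.1 ∉ stackUnion D) :
      Step ⟨Status.conflict L σ, C, D, χ, α⟩ ⟨Status.ready, addFirst C L, D, χ, α⟩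
  | unsat (C : List (Set (Clause X Y))) (D : List (Set (X ⊕ Y)))
      (χ α : (X → Bool) → Prop) (L : Clause X Y) (σ : Assn X Y)
      (hvars : ∀ l ∈ L, l.1 ∈ first D)
      (hfals : ∀ l ∈ L, ¬ satLit σ l) :
      Step ⟨Status.conflict L σ, C, D, χ, α⟩ ⟨Status.unsat, C, D, χ, α⟩
  | backtrack (S : Status X Y) (C : List (Set (Clause X Y))) (D : List (Set (X ⊕ Y)))
      (χ α : (X → Bool) → Prop) (k : ℕ) (h0 : 0 < k) (hk : k ≤ C.length) :
      Step ⟨S, C, D, χ, α⟩ ⟨S, C.take k, D.take k, χ, α⟩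

/-- Reachability from the initial state via the basic ID rules. -/
def Reachable {X Y : Type} [DecidableEq X] [DecidableEq Y] (φ : Set (Clause X Y))
    (s : IDState X Y) : Prop :=
  Relation.ReflTransGen Step (initState φ) s

section AuxProof

variable {X Y : Type}

/-- A clause entailed by `φ`. -/
def Entailed (φ : Set (Clause X Y)) (c : Clause X Y) : Prop :=
  ∀ τ : Assn X Y, satCnf τ φ → satClause τ c

lemma satCnf_mono {σ : Assn X Y} {ψ ψ' : Set (Clause X Y)} (h : ψ ⊆ ψ')
    (hs : satCnf σ ψ') : satCnf σ ψ := fun c hc => hs c (h hc)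

lemma restrictC_mono {C C' : Set (Clause X Y)} {D D' : Set (X ⊕ Y)}
    (hC : C ⊆ C') (hD : D ⊆ D') : restrictC C D ⊆ restrictC C' D' := by
  rintro c ⟨h1, h2⟩
  exact ⟨hC h1, fun l hl => hD (h2 l hl)⟩

lemma stackUnion_singleton {β : Type} (s : Set β) : stackUnion [s] = s := by
  ext x; simp [stackUnion]

lemma head_subset_stackUnion {β : Type} (s : Set β) (rest : List (Set β)) :
    s ⊆ stackUnion (s :: rest) := fun x hx => ⟨s, List.mem_cons_self, hx⟩

lemma addLast_length {β : Type} (s : Set β) (rest : List (Set β)) (x : β) :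
    (addLast (s :: rest) x).length = rest.length + 1 := by
  induction rest generalizing s with
  | nil => rfl
  | cons t r ih => simp [addLast, ih]

lemma first_cons {β : Type} (s : Set β) (rest : List (Set β)) :
    first (s :: rest) = s := rfl

lemma resolve [DecidableEq X] [DecidableEq Y] {τ : Assn X Y} {L c : Clause X Y} {l : Lit X Y}
    (hL : satClause τ L) (hc : satClause τ c) :
    satClause τ (L.erase l ∪ c.erase (l.1, !l.2)) := by
  obtain ⟨l', hl', hs'⟩ := hL
  by_cases h : l' = l
  · subst h
    obtain ⟨l'', hl'', hs''⟩ := hc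
    refine ⟨l'', Finset.mem_union_right _ (Finset.mem_erase.2 ⟨?_, hl''⟩), hs''⟩
    rintro rfl
    simp only [satLit] at hs' hs''
    rw [hs'] at hs''
    simp at hs''
  · exact ⟨l', Finset.mem_union_left _ (Finset.mem_erase.2 ⟨h, hl'⟩), hs'⟩

/-- The main invariant. -/
def IDInv [DecidableEq X] [DecidableEq Y] (φ : Set (Clause X Y)) (s : IDState X Y) : Prop :=
  s.chi = (fun _ => True) ∧ s.alpha = (fun _ => True) ∧
  s.C.length = s.D.length ∧ 0 < s.C.length ∧
  (∀ c ∈ first s.C, Entailed φ c) ∧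
  (∀ σ τ : Assn X Y, satCnf σ (restrictC (first s.C) (first s.D)) → satCnf τ φ →
     restrX τ = restrX σ → ∀ w ∈ first s.D, τ w = σ w) ∧
  (∀ L d, s.status = Status.conflict L d →
     Entailed φ L ∧ satCnf d (restrictC (first s.C) (first s.D))) ∧
  s.status ≠ Status.unsat

lemma inv_init [DecidableEq X] [DecidableEq Y] (φ : Set (Clause X Y)) :
    IDInv φ (initState φ) := by
  refine ⟨rfl, rfl, rfl, one_pos, ?_, ?_, ?_, ?_⟩
  · intro c hc τ hτ
    exact hτ c hc
  · rintro σ τ _ _ hX w ⟨x, rfl⟩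
    exact congrFun hX x
  · intro L d h
    simp [initState] at h
  · simp [initState]

lemma inv_step [DecidableEq X] [DecidableEq Y] {φ : Set (Clause X Y)}
    (htrue : qbfTrue φ) {s t : IDState X Y}
    (hinv : IDInv φ s) (hst : Step s t) : IDInv φ t := by
  cases hst with
  | propagate C D χ α v hv hdet hunc =>
    obtain ⟨hχ, hα, hlen, hpos, hent, hforce, hconf, hns⟩ := hinv
    -- split on length of D
    cases C with
    | nil => simp at hpos
    | cons c0 Cr =>
    cases D with
    | nil => simp at hlen
    | cons d0 Dr =>
    cases Dr with
    | cons d1 Dr' =>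
      -- first D unchanged
      refine ⟨hχ, hα, ?_, hpos, hent, hforce, ?_, ?_⟩
      · simpa [addLast_length] using hlen
      · intro L d h; simp at h
      · simp
    | nil =>
      have hCr : Cr = [] := by
        simpa using hlen
      subst hCr
      refine ⟨hχ, hα, rfl, one_pos, hent, ?_, ?_, ?_⟩
      · -- the forcing invariant with the new variable
        intro σ τ hσ hτ hX w hw
        have hσ' : satCnf σ (restrictC (first [c0]) (first [d0])) := by
          refine satCnf_mono (restrictC_mono (le_refl _) ?_) hσ
          · intro x hx
            exact Set.mem_insert_of_mem _ hx
        have hIH : ∀ w ∈ (d0 : Set (X ⊕ Y)), τ w = σ w := hforce σ τ hσ' hτ hX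
        -- use determinism
        have hχ2 : χ = fun _ => True := hχ
        have hα2 : α = fun _ => True := hα
        have hχα : (fun xa => χ xa ∧ α xa) (restrX σ) := by
          rw [hχ2, hα2]; exact ⟨trivial, trivial⟩
        have hσ'' : satCnf σ (restrictC (stackUnion [c0]) (stackUnion [d0])) := by
          rwa [stackUnion_singleton, stackUnion_singleton]
        have hdet' := hdet σ hσ'' hχα
        have hunc' := hunc σ hσ'' hχα
        rw [stackUnion_singleton, stackUnion_singleton] at hdet' hunc'
        -- extract the unique polarity b
        obtain ⟨b, hAnt⟩ : ∃ b, Ant c0 v d0 b σ := by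
          rcases hdet' with h | h
          · exact ⟨true, h⟩
          · exact ⟨false, h⟩
        obtain ⟨c, hcUC, hvb, hfal⟩ := hAnt
        have hcC : c ∈ c0 := hcUC.1
        have hcH : hasUC c v d0 := hcUC.2
        have hnb : (Sum.inr v, !b) ∉ c := by
          intro hmem
          apply hunc'
          cases b
          · exact ⟨⟨c, hcUC, by simpa using hmem, hfal⟩, ⟨c, hcUC, hvb, hfal⟩⟩
          · exact ⟨⟨c, hcUC, hvb, hfal⟩, ⟨c, hcUC, by simpa using hmem, hfal⟩⟩
        -- τ forces v ↦ b
        have hτv : τ (Sum.inr v) = b := by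
          obtain ⟨l, hlc, hls⟩ := hent c hcC τ hτ
          by_cases hl1 : l.1 = Sum.inr v
          · have hl2 : l.2 = b := by
              by_contra hne
              apply hnb
              have : l = (Sum.inr v, !b) := by
                cases b <;> cases h2 : l.2 <;>
                  simp_all [Prod.ext_iff] <;> exact Prod.ext hl1 h2
              rwa [this] at hlc
            rw [satLit, hl1, hl2] at hls
            exact hls
          · exfalso
            have hmem : l.1 ∈ (d0 : Set (X ⊕ Y)) := hcH.2 l hlc hl1
            apply hfal l hlc hl1
            rw [satLit, ← hIH l.1 hmem]
            exact hls
        -- σ forces v ↦ b as well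
        have hσv : σ (Sum.inr v) = b := by
          have hcR : c ∈ restrictC (first [c0]) (first (addLast [d0] (Sum.inr v))) := by
            refine ⟨hcC, ?_⟩
            intro l hl
            by_cases hl1 : l.1 = Sum.inr v
            · rw [hl1]
              exact Set.mem_insert _ _
            · exact Set.mem_insert_of_mem _ (hcH.2 l hl hl1)
          obtain ⟨l, hlc, hls⟩ := hσ c hcR
          by_cases hl1 : l.1 = Sum.inr v
          · have hl2 : l.2 = b := by
              by_contra hne
              apply hnb
              have : l = (Sum.inr v, !b) := by
                cases b <;> cases h2 : l.2 <;>
                  simp_all [Prod.ext_iff] <;> exact Prod.ext hl1 h2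
              rwa [this] at hlc
            rw [satLit, hl1, hl2] at hls
            exact hls
          · exact absurd hls (hfal l hlc hl1)
        -- conclude
        rcases hw with hw | hw
        · rw [hw, hτv, hσv]
        · exact hIH w hw
      · intro L d h; simp at h
      · simp
  | decide C D χ α v δ hv hδfin hδ =>
    obtain ⟨hχ, hα, hlen, hpos, hent, hforce, hconf, hns⟩ := hinv
    cases C with
    | nil => simp at hpos
    | cons c0 Cr =>
    cases D with
    | nil => simp at hlen
    | cons d0 Dr =>
      refine ⟨hχ, hα, by simpa using hlen, by simp, hent, hforce, ?_, ?_⟩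
      · intro L d h; simp at h
      · simp
  | sat C D χ hD =>
    obtain ⟨hχ, hα, hlen, hpos, hent, hforce, hconf, hns⟩ := hinv
    refine ⟨hχ, hα, hlen, hpos, hent, hforce, ?_, ?_⟩
    · intro L d h; simp at h
    · simp
  | conflict C D χ α v σ hv hsat hχ' hα' ht hf =>
    obtain ⟨hχ, hα, hlen, hpos, hent, hforce, hconf, hns⟩ := hinv
    cases C with
    | nil => simp at hpos
    | cons c0 Cr =>
    cases D with
    | nil => simp at hlen
    | cons d0 Dr =>
      refine ⟨hχ, hα, hlen, hpos, hent, hforce, ?_, ?_⟩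
      · intro L d h
        injection h with h1 h2
        subst h2
        constructor
        · intro τ hτ
          rw [← h1]
          rcases hb : τ (Sum.inr v) with _ | _
          · exact ⟨(Sum.inr v, false), by simp, hb⟩
          · exact ⟨(Sum.inr v, true), by simp, hb⟩
        · refine satCnf_mono (restrictC_mono ?_ ?_) hsat
          · exact head_subset_stackUnion c0 Cr
          · exact head_subset_stackUnion d0 Dr
      · simp
  | analyze C D χ α L σ c l hc hl hlc =>
    obtain ⟨hχ, hα, hlen, hpos, hent, hforce, hconf, hns⟩ := hinv
    obtain ⟨hLE, hLs⟩ := hconf L σ rfl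
    refine ⟨hχ, hα, hlen, hpos, hent, hforce, ?_, ?_⟩
    · intro L' d h
      injection h with h1 h2
      subst h2
      refine ⟨?_, hLs⟩
      intro τ hτ
      rw [← h1]
      exact resolve (hLE τ hτ) (hent c hc τ hτ)
    · simp
  | learn C D χ α L σ h =>
    obtain ⟨hχ, hα, hlen, hpos, hent, hforce, hconf, hns⟩ := hinv
    obtain ⟨hLE, hLs⟩ := hconf L σ rfl
    cases C with
    | nil => simp at hpos
    | cons c0 Cr =>
    cases D with
    | nil => simp at hlen
    | cons d0 Dr =>
      refine ⟨hχ, hα, hlen, hpos, ?_, ?_, ?_, ?_⟩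
      · intro c hc
        rcases hc with hc | hc
        · rw [hc]; exact hLE
        · exact hent c hc
      · intro σ' τ hσ' hτ hX
        refine hforce σ' τ ?_ hτ hX
        refine satCnf_mono (restrictC_mono ?_ (le_refl _)) hσ'
        exact Set.subset_insert _ _
      · intro L' d hmm; simp at hmm
      · simp
  | unsat C D χ α L σ hvars hfals =>
    exfalso
    obtain ⟨hχ, hα, hlen, hpos, hent, hforce, hconf, hns⟩ := hinv
    obtain ⟨hLE, hLs⟩ := hconf L σ rfl
    obtain ⟨f, hf⟩ := htrue
    set xa := restrX σ with hxa
    have hτφ : satCnf (combine xa (f xa)) φ := hf xa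
    have hX : restrX (combine xa (f xa)) = restrX σ := rfl
    have hagree := hforce σ (combine xa (f xa)) hLs hτφ hX
    obtain ⟨l, hlL, hls⟩ := hLE (combine xa (f xa)) hτφ
    apply hfals l hlL
    rw [satLit, ← hagree l.1 (hvars l hlL)]
    exact hls
  | backtrack S C D χ α k h0 hk =>
    obtain ⟨hχ, hα, hlen, hpos, hent, hforce, hconf, hns⟩ := hinv
    cases C with
    | nil => simp at hpos
    | cons c0 Cr =>
    cases D with
    | nil => simp at hlen
    | cons d0 Dr =>
    cases k with
    | zero => simp at h0
    | succ k =>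
      have hlen' : Cr.length = Dr.length := by simpa using hlen
      refine ⟨hχ, hα, ?_, ?_, hent, hforce, hconf, hns⟩
      · simp only [List.length_take, List.length_cons]
        omega
      · simp only [List.length_take, List.length_cons]
        omega
end AuxProof

/-- If Φ is true, no state with status UNSAT is reachable via basic ID. -/
theorem stmt_6 {X Y : Type} [Fintype X] [Fintype Y] [DecidableEq X] [DecidableEq Y]
    (φ : Set (Clause X Y)) (hφfin : φ.Finite)
    (hφY : ∀ c ∈ φ, ∃ l ∈ c, ∃ y : Y, l.1 = Sum.inr y)
    (htrue : qbfTrue φ) :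
    ¬ ∃ s : IDState X Y, Reachable φ s ∧ s.status = Status.unsat := by
  rintro ⟨s, hreach, hstat⟩
  have key : ∀ s' : IDState X Y, Reachable φ s' → IDInv φ s' := by
    intro s' h
    induction h with
    | refl => exact inv_init φ
    | tail hab hbc ih => exact inv_step htrue ih hbc
  exact (key s hreach).2.2.2.2.2.2.2 hstat
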